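/- Let p be a prime, G = ℤ_{p^{α₁}} ⊕ ⋯ ⊕ ℤ_{p^{α_r}}, h = α₁ + ⋯ + α_r, and m ≥ 1 with p^h > Σ_{j=1}^r m(p^{α_j} − 1). Then every sequence over G of length p^h + m Σ_{j=1}^r (p^{α_j} − 1) contains a subsequence S' of length exactly p^h such that e_m(S') is the zero element of G (where e_m is computed coordinate-wise). -/

import Mathlib

open Finset

/-- The `m`-th elementary symmetric expression of the subsequence of `g` selected
by the index set `J`. -/
def eSym {n : ℕ} {R : Type*} [CommRing R] (m : ℕ) (g : Fin n → R) (J : Finset (Fin n)) : R :=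
  ∑ T ∈ J.powersetCard m, ∏ i ∈ T, g i

namespace Stmt13

/-! ### Lucas-type lemma -/

lemma choose_pow_sub_one (p : ℕ) (hp : p.Prime) (a s : ℕ) :
    (((s + (p ^ a - 1)).choose (p ^ a - 1) : ℕ) : ZMod p) = if p ^ a ∣ s then 1 else 0 := by
  haveI : Fact p.Prime := ⟨hp⟩
  have hp2 := hp.two_le
  induction a generalizing s with
  | zero => simp
  | succ a ih =>
    have hq : 1 ≤ p ^ a := Nat.one_le_pow _ _ (by omega)
    have hps : p ^ (a + 1) = p * p ^ a := by ring
    -- write N = p^(a+1) - 1 = p * (p^a - 1) + (p - 1)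
    have hN : p ^ (a + 1) - 1 = p * (p ^ a - 1) + (p - 1) := by
      have h1 : p * (p ^ a - 1) = p * p ^ a - p := by
        rw [Nat.mul_sub, Nat.mul_one]
      rw [hps, h1]
      have h2 : p ≤ p * p ^ a := Nat.le_mul_of_pos_right _ (by omega)
      omega
    set N : ℕ := p ^ (a + 1) - 1 with hNdef
    have key := (Choose.choose_modEq_choose_mod_mul_choose_div_nat
      (n := s + N) (k := N) (p := p))
    have hcast : (((s + N).choose N : ℕ) : ZMod p)
        = ((((s + N) % p).choose (N % p) * ((s + N) / p).choose (N / p) : ℕ) : ZMod p) :=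
      (ZMod.natCast_eq_natCast_iff _ _ _).mpr key
    by_cases hdvd : p ∣ s
    · obtain ⟨t, rfl⟩ := hdvd
      have hsum : p * t + N = p * (t + (p ^ a - 1)) + (p - 1) := by
        rw [hN]; ring
      have hmod : (p * t + N) % p = p - 1 := by
        rw [hsum, Nat.mul_add_mod]
        exact Nat.mod_eq_of_lt (by omega)
      have hdiv : (p * t + N) / p = t + (p ^ a - 1) := by
        rw [hsum, Nat.mul_add_div (by omega)]
        rw [Nat.div_eq_of_lt (by omega), Nat.add_zero]
      have hNmod : N % p = p - 1 := by
        rw [hN, Nat.mul_add_mod]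
        exact Nat.mod_eq_of_lt (by omega)
      have hNdiv : N / p = p ^ a - 1 := by
        rw [hN, Nat.mul_add_div (by omega)]
        rw [Nat.div_eq_of_lt (by omega), Nat.add_zero]
      rw [hcast, hmod, hdiv, hNmod, hNdiv, Nat.choose_self]
      push_cast
      rw [one_mul, ih t]
      have : p ^ (a + 1) ∣ p * t ↔ p ^ a ∣ t := by
        rw [hps]
        exact mul_dvd_mul_iff_left (by positivity)
      simp [this]
    · -- s % p ≠ 0
      have hu : s % p ≠ 0 := fun h => hdvd (Nat.dvd_of_mod_eq_zero h)
      have hulty : s % p < p := Nat.mod_lt _ (by omega)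
      have hseq := (Nat.div_add_mod s p).symm
      have hsum : s + N = p * (s / p + p ^ a) + (s % p - 1) := by
        rw [hN]
        have : p * (s / p + p ^ a) = p * (s / p) + p * (p ^ a - 1) + p := by
          rw [Nat.mul_add, Nat.mul_sub, Nat.mul_one]
          have h2 : p ≤ p * p ^ a := Nat.le_mul_of_pos_right _ (by omega)
          omega
        omega
      have hmod : (s + N) % p = s % p - 1 := by
        rw [hsum, Nat.mul_add_mod]
        exact Nat.mod_eq_of_lt (by omega)
      have hNmod : N % p = p - 1 := by
        rw [hN, Nat.mul_add_mod]
        exact Nat.mod_eq_of_lt (by omega)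
      have hzero : ((s + N) % p).choose (N % p) = 0 := by
        rw [hmod, hNmod]
        exact Nat.choose_eq_zero_of_lt (by omega)
      have hnd : ¬ p ^ (a + 1) ∣ s := by
        intro h
        exact hdvd (dvd_trans (dvd_pow_self p (Nat.succ_ne_zero a)) h)
      rw [hcast, hzero]
      simp [hnd]

/-! ### Degree framework on the Boolean cube -/

variable {n : ℕ}

/-- Monomial function on the cube: indicator that `T ⊆ S`. -/
def mono (T : Finset (Fin n)) : Finset (Fin n) → ℚ := fun S => if T ⊆ S then 1 else 0

/-- Functions of "degree at most d" on the cube. -/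
def degLE (n d : ℕ) : Submodule ℚ (Finset (Fin n) → ℚ) :=
  Submodule.span ℚ (mono '' {T : Finset (Fin n) | T.card ≤ d})

lemma mono_mem {T : Finset (Fin n)} {d : ℕ} (h : T.card ≤ d) : mono T ∈ degLE n d :=
  Submodule.subset_span ⟨T, h, rfl⟩

lemma degLE_mono {d d' : ℕ} (h : d ≤ d') : degLE n d ≤ degLE n d' :=
  Submodule.span_mono (Set.image_mono fun _ hT => le_trans hT h)

lemma mono_mul (T T' : Finset (Fin n)) : mono T * mono T' = mono (T ∪ T') := by
  funext S
  simp only [mono, Pi.mul_apply]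
  by_cases h1 : T ⊆ S <;> by_cases h2 : T' ⊆ S <;>
    simp [h1, h2, Finset.union_subset_iff]

lemma one_mem_degLE (d : ℕ) : (1 : Finset (Fin n) → ℚ) ∈ degLE n d := by
  have : (1 : Finset (Fin n) → ℚ) = mono ∅ := by
    funext S; simp [mono]
  rw [this]
  exact mono_mem (by simp)

lemma mul_mem_degLE {f g : Finset (Fin n) → ℚ} {d e : ℕ}
    (hf : f ∈ degLE n d) (hg : g ∈ degLE n e) : f * g ∈ degLE n (d + e) := by
  have h1 : f * g ∈ degLE n d * degLE n e := Submodule.mul_mem_mul hf hg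
  rw [degLE, degLE, Submodule.span_mul_span] at h1
  refine Submodule.span_le.mpr ?_ h1
  rintro x hx
  rw [Set.mem_mul] at hx
  obtain ⟨u, hu, v, hv, rfl⟩ := hx
  obtain ⟨T, hT, rfl⟩ := hu
  obtain ⟨T', hT', rfl⟩ := hv
  rw [mono_mul]
  exact mono_mem (le_trans (Finset.card_union_le _ _) (Nat.add_le_add hT hT'))

lemma prod_mem_degLE {ι : Type*} (s : Finset ι) (f : ι → Finset (Fin n) → ℚ) (d : ι → ℕ)
    (h : ∀ i ∈ s, f i ∈ degLE n (d i)) :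
    (∏ i ∈ s, f i) ∈ degLE n (∑ i ∈ s, d i) := by
  classical
  induction s using Finset.induction with
  | empty => simpa using one_mem_degLE 0
  | insert a s hx ih =>
    rw [Finset.prod_insert hx, Finset.sum_insert hx]
    exact mul_mem_degLE (h a (Finset.mem_insert_self a s))
      (ih fun i hi => h i (Finset.mem_insert_of_mem hi))

/-- Key vanishing: the signed sum over the cube of a function of degree `< n` is zero. -/
lemma signed_sum_eq_zero {f : Finset (Fin n) → ℚ} {d : ℕ} (hf : f ∈ degLE n d) (hd : d < n) :
    ∑ S : Finset (Fin n), (-1 : ℚ) ^ S.card * f S = 0 := by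
  refine Submodule.span_induction ?_ ?_ ?_ ?_ hf
  · rintro x ⟨T, hT, rfl⟩
    -- sum over S containing T
    have hsub : ∑ S : Finset (Fin n), (-1 : ℚ) ^ S.card * mono T S
        = ∑ S ∈ Finset.univ.filter (fun S => T ⊆ S), (-1 : ℚ) ^ S.card := by
      rw [Finset.sum_filter]
      refine Finset.sum_congr rfl fun S _ => ?_
      by_cases h : T ⊆ S <;> simp [mono, h]
    rw [hsub]
    have hdisj : ∀ U : Finset (Fin n), U ⊆ Tᶜ → Disjoint T U := by
      intro U hU
      rw [Finset.disjoint_left]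
      intro x hxT hxU
      have := hU hxU
      simp only [Finset.mem_compl] at this
      exact this hxT
    have hbij : ∑ S ∈ Finset.univ.filter (fun S => T ⊆ S), (-1 : ℚ) ^ S.card
        = ∑ U ∈ Tᶜ.powerset, (-1 : ℚ) ^ (T ∪ U).card := by
      refine Finset.sum_nbij' (fun S => S \ T) (fun U => T ∪ U) ?_ ?_ ?_ ?_ ?_
      · intro S hS
        simp only [Finset.mem_filter, Finset.mem_univ, true_and] at hS
        rw [Finset.mem_powerset]
        intro x hx
        rw [Finset.mem_sdiff] at hx
        simp [hx.2]
      · intro U hU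
        simp only [Finset.mem_filter, Finset.mem_univ, true_and]
        exact Finset.subset_union_left
      · intro S hS
        simp only [Finset.mem_filter, Finset.mem_univ, true_and] at hS
        exact Finset.union_sdiff_of_subset hS
      · intro U hU
        rw [Finset.mem_powerset] at hU
        exact Finset.union_sdiff_cancel_left (hdisj U hU)
      · intro S hS
        simp only [Finset.mem_filter, Finset.mem_univ, true_and] at hS
        rw [Finset.union_sdiff_of_subset hS]
    rw [hbij]
    have hcard : ∀ U ∈ Tᶜ.powerset, (T ∪ U).card = T.card + U.card := by
      intro U hU
      rw [Finset.mem_powerset] at hU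
      exact Finset.card_union_of_disjoint (hdisj U hU)
    rw [Finset.sum_congr rfl fun U hU => by rw [hcard U hU, pow_add]]
    rw [← Finset.mul_sum]
    have hne : Tᶜ.Nonempty := by
      rw [← Finset.card_pos, Finset.card_compl]
      have : T.card < n := lt_of_le_of_lt hT hd
      have := Fintype.card_fin n
      omega
    have hz : (∑ U ∈ Tᶜ.powerset, (-1:ℚ)^U.card) = 0 := by
      have h := Finset.sum_powerset_neg_one_pow_card_of_nonempty hne
      have h2 := congrArg (fun z : ℤ => (z : ℚ)) h
      push_cast at h2
      exact h2
    rw [hz, mul_zero]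
  · simp
  · intro f g _ _ hfs hgs
    simp only [Pi.add_apply, mul_add, Finset.sum_add_distrib, hfs, hgs, add_zero]
  · intro c f _ hfs
    simp only [Pi.smul_apply, smul_eq_mul]
    have : ∀ S : Finset (Fin n), (-1:ℚ)^S.card * (c * f S) = c * ((-1:ℚ)^S.card * f S) := by
      intro S; ring
    simp only [this, ← Finset.mul_sum, hfs, mul_zero]

/-! ### Specific functions -/

lemma card_mem_degLE : (fun S : Finset (Fin n) => (S.card : ℚ)) ∈ degLE n 1 := by
  have heq : (fun S : Finset (Fin n) => (S.card : ℚ)) = ∑ i : Fin n, mono {i} := by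
    funext S
    rw [Finset.sum_apply]
    have : ∀ i : Fin n, mono {i} S = if i ∈ S then (1 : ℚ) else 0 := by
      intro i; simp [mono, Finset.singleton_subset_iff]
    rw [Finset.sum_congr rfl fun i _ => this i, Finset.sum_boole]
    simp
  rw [heq]
  exact Submodule.sum_mem _ fun i _ => mono_mem (by simp)

lemma esym_mem_degLE (A : Fin n → ℕ) (m : ℕ) :
    (fun S : Finset (Fin n) => ((∑ T ∈ S.powersetCard m, ∏ i ∈ T, A i : ℕ) : ℚ)) ∈ degLE n m := by
  have heq : (fun S : Finset (Fin n) => ((∑ T ∈ S.powersetCard m, ∏ i ∈ T, A i : ℕ) : ℚ))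
      = ∑ T ∈ Finset.univ.powersetCard m, (∏ i ∈ T, (A i : ℚ)) • mono T := by
    funext S
    rw [Finset.sum_apply]
    push_cast
    have hps : S.powersetCard m = (Finset.univ.powersetCard m).filter (fun T => T ⊆ S) := by
      ext T
      simp only [Finset.mem_powersetCard, Finset.mem_filter, Finset.subset_univ, true_and]
      tauto
    rw [hps, Finset.sum_filter]
    refine Finset.sum_congr rfl fun T _ => ?_
    by_cases hT : T ⊆ S <;> simp [mono, hT]
  rw [heq]
  refine Submodule.sum_mem _ fun T hT => Submodule.smul_mem _ _ (mono_mem ?_)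
  rw [Finset.mem_powersetCard] at hT
  exact le_of_eq hT.2

lemma ascFactorial_cast (s N : ℕ) :
    (((s + 1).ascFactorial N : ℕ) : ℚ) = ∏ k ∈ Finset.range N, ((s : ℚ) + k + 1) := by
  induction N with
  | zero => simp
  | succ N ih =>
    rw [Nat.ascFactorial_succ, Finset.prod_range_succ, Nat.cast_mul, ih, mul_comm]
    push_cast
    ring

lemma choose_cast_eq (s N : ℕ) :
    (((s + N).choose N : ℕ) : ℚ) = (1 / (Nat.factorial N : ℚ)) * ∏ k ∈ Finset.range N, ((s : ℚ) + k + 1) := by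
  have h := Nat.ascFactorial_eq_factorial_mul_choose s N
  have h2 := congrArg (fun z : ℕ => (z : ℚ)) h
  simp only [Nat.cast_mul] at h2
  rw [ascFactorial_cast] at h2
  have hfac : (Nat.factorial N : ℚ) ≠ 0 := by positivity
  rw [h2, one_div, ← mul_assoc, inv_mul_cancel₀ hfac, one_mul]

lemma choose_comp_mem_degLE (fN : Finset (Fin n) → ℕ) {d : ℕ}
    (hf : (fun S => ((fN S : ℕ) : ℚ)) ∈ degLE n d) (N : ℕ) :
    (fun S => (((fN S + N).choose N : ℕ) : ℚ)) ∈ degLE n (N * d) := by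
  have heq : (fun S => (((fN S + N).choose N : ℕ) : ℚ))
      = (1 / (Nat.factorial N : ℚ)) • ∏ k ∈ Finset.range N,
          ((fun S => ((fN S : ℕ) : ℚ)) + fun _ => ((k : ℚ) + 1)) := by
    funext S
    rw [Pi.smul_apply, Finset.prod_apply, choose_cast_eq]
    simp only [Pi.add_apply, smul_eq_mul, one_div]
    congr 1
    exact Finset.prod_congr rfl fun k _ => by ring
  rw [heq]
  refine Submodule.smul_mem _ _ ?_
  have hN : (N * d) = ∑ _k ∈ Finset.range N, d := by simp [mul_comm]
  rw [hN]
  refine prod_mem_degLE _ _ _ fun k _ => ?_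
  refine Submodule.add_mem _ hf ?_
  have : (fun _ : Finset (Fin n) => ((k : ℚ) + 1)) = ((k : ℚ) + 1) • (1 : Finset (Fin n) → ℚ) := by
    funext S; simp
  rw [this]
  exact Submodule.smul_mem _ _ (one_mem_degLE d)

end Stmt13

theorem aux (p : ℕ) (hp : p.Prime) (r : ℕ) (α : Fin r → ℕ)
    (m h n : ℕ) (hm : 1 ≤ m)
    (hdeg : (p ^ h - 1) * 1 + ∑ j, (p ^ α j - 1) * m < n)
    (hlt2 : n < 2 * p ^ h)
    (g : Fin n → (∀ j : Fin r, ZMod (p ^ α j))) :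
    ∃ J : Finset (Fin n), J.card = p ^ h ∧ eSym m g J = 0 := by
  classical
  haveI : Fact p.Prime := ⟨hp⟩
  haveI : Fact (1 < p) := ⟨hp.one_lt⟩
  have hph : 1 ≤ p ^ h := Nat.one_le_pow _ _ hp.pos
  have hpa : ∀ j, 1 ≤ p ^ α j := fun j => Nat.one_le_pow _ _ hp.pos
  -- the integer-valued symmetric functions
  set F : Fin r → Finset (Fin n) → ℕ :=
    fun j S => ∑ T ∈ S.powersetCard m, ∏ i ∈ T, (g i j).val with hF
  set c : Finset (Fin n) → ℕ := fun S =>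
    (S.card + (p ^ h - 1)).choose (p ^ h - 1) *
      ∏ j, (F j S + (p ^ α j - 1)).choose (p ^ α j - 1) with hc
  -- degree bound
  have hmem : (fun S => ((c S : ℕ) : ℚ)) ∈
      Stmt13.degLE n ((p ^ h - 1) * 1 + ∑ j, (p ^ α j - 1) * m) := by
    have hceq : (fun S => ((c S : ℕ) : ℚ))
        = (fun S : Finset (Fin n) => (((S.card + (p ^ h - 1)).choose (p ^ h - 1) : ℕ) : ℚ))
          * ∏ j : Fin r,
            (fun S : Finset (Fin n) => (((F j S + (p ^ α j - 1)).choose (p ^ α j - 1) : ℕ) : ℚ)) := by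
      funext S
      simp only [Pi.mul_apply, Finset.prod_apply, hc]
      push_cast
      ring
    rw [hceq]
    refine Stmt13.mul_mem_degLE ?_ ?_
    · exact Stmt13.choose_comp_mem_degLE _ Stmt13.card_mem_degLE _
    · exact Stmt13.prod_mem_degLE _ _ _
        fun j _ => Stmt13.choose_comp_mem_degLE _ (Stmt13.esym_mem_degLE _ m) _
  have total := Stmt13.signed_sum_eq_zero hmem hdeg
  -- move to ℤ then to ZMod p
  have hZ : ∑ S : Finset (Fin n), (-1 : ℤ) ^ S.card * (c S : ℤ) = 0 := by
    have hcast : ((∑ S : Finset (Fin n), (-1 : ℤ) ^ S.card * (c S : ℤ) : ℤ) : ℚ)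
        = ∑ S : Finset (Fin n), (-1 : ℚ) ^ S.card * ((c S : ℕ) : ℚ) := by
      push_cast
      rfl
    exact_mod_cast hcast.trans total
  have hZp : ∑ S : Finset (Fin n), (-1 : ZMod p) ^ S.card * ((c S : ℕ) : ZMod p) = 0 := by
    have h2 := congrArg (fun z : ℤ => ((z : ZMod p))) hZ
    push_cast at h2
    exact h2
  -- each term is an indicator of being a "solution"
  have hcmod : ∀ S : Finset (Fin n), ((c S : ℕ) : ZMod p)
      = if (p ^ h ∣ S.card ∧ ∀ j, p ^ α j ∣ F j S) then 1 else 0 := by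
    intro S
    have h1 := Stmt13.choose_pow_sub_one p hp h S.card
    have h2 : ∀ j : Fin r,
        (((F j S + (p ^ α j - 1)).choose (p ^ α j - 1) : ℕ) : ZMod p)
          = if p ^ α j ∣ F j S then 1 else 0 :=
      fun j => Stmt13.choose_pow_sub_one p hp (α j) (F j S)
    rw [hc]
    push_cast
    rw [h1, Finset.prod_congr rfl fun j _ => h2 j, Finset.prod_boole]
    by_cases hA : p ^ h ∣ S.card <;> by_cases hB : ∀ j, p ^ α j ∣ F j S <;>
      simp [hA, hB]
  rw [Finset.sum_congr rfl fun S _ => by rw [hcmod S, mul_ite, mul_one, mul_zero]] at hZp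
  rw [← Finset.sum_filter] at hZp
  -- suppose there is no good subsequence
  by_contra hgoal
  push_neg at hgoal
  have hsolempty : ∀ S : Finset (Fin n),
      (p ^ h ∣ S.card ∧ ∀ j, p ^ α j ∣ F j S) → S = ∅ := by
    rintro S ⟨hd, hdF⟩
    rcases Nat.eq_zero_or_pos S.card with h0 | hpos
    · exact Finset.card_eq_zero.mp h0
    exfalso
    have hle : S.card ≤ n := by
      have := Finset.card_le_univ S
      simpa using this
    have hcardeq : S.card = p ^ h := by
      obtain ⟨t, ht⟩ := hd
      rcases t with _ | _ | t
      · omega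
      · omega
      · exfalso
        have h2le : p ^ h * 2 ≤ p ^ h * (t + 1 + 1) := Nat.mul_le_mul_left _ (by omega)
        omega
    refine hgoal S hcardeq ?_
    funext j
    haveI : NeZero (p ^ α j) := ⟨Nat.one_le_iff_ne_zero.mp (hpa j)⟩
    have hz : ((F j S : ℕ) : ZMod (p ^ α j)) = 0 :=
      (ZMod.natCast_eq_zero_iff _ _).mpr (hdF j)
    have heS : eSym m g S j = ((F j S : ℕ) : ZMod (p ^ α j)) := by
      rw [hF]
      push_cast
      rw [eSym, Finset.sum_apply]
      refine Finset.sum_congr rfl fun T _ => ?_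
      rw [Finset.prod_apply]
      refine Finset.prod_congr rfl fun i _ => ?_
      rw [ZMod.natCast_val, ZMod.cast_id]
    rw [Pi.zero_apply, heS, hz]
  have hfe : Finset.univ.filter
      (fun S : Finset (Fin n) => p ^ h ∣ S.card ∧ ∀ j, p ^ α j ∣ F j S) = {∅} := by
    ext S
    simp only [Finset.mem_filter, Finset.mem_univ, true_and, Finset.mem_singleton]
    constructor
    · exact hsolempty S
    · rintro rfl
      refine ⟨by simp, fun j => ?_⟩
      have hpc : (∅ : Finset (Fin n)).powersetCard m = ∅ := by
        ext T
        simp only [Finset.mem_powersetCard, Finset.subset_empty, Finset.notMem_empty,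
          iff_false, not_and]
        rintro rfl
        simp only [Finset.card_empty]
        omega
      have : F j ∅ = 0 := by rw [hF]; simp [hpc]
      simp [this]
  rw [hfe] at hZp
  simp only [Finset.sum_singleton, Finset.card_empty, pow_zero] at hZp
  exact one_ne_zero hZp

theorem stmt_13 (p : ℕ) (hp : p.Prime) (r : ℕ) (α : Fin r → ℕ) (hα : ∀ j, 1 ≤ α j)
    (m : ℕ) (hm : 1 ≤ m)
    (hbig : ∑ j, m * (p ^ α j - 1) < p ^ (∑ j, α j))
    (g : Fin (p ^ (∑ j, α j) + m * ∑ j, (p ^ α j - 1)) → (∀ j : Fin r, ZMod (p ^ α j))) :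
    ∃ J : Finset (Fin (p ^ (∑ j, α j) + m * ∑ j, (p ^ α j - 1))),
      J.card = p ^ (∑ j, α j) ∧ eSym m g J = 0 := by
  have hph : 1 ≤ p ^ (∑ j, α j) := Nat.one_le_pow _ _ hp.pos
  have hs1 : ∑ j, (p ^ α j - 1) * m = m * ∑ j, (p ^ α j - 1) := by
    rw [Finset.mul_sum]
    exact Finset.sum_congr rfl fun j _ => mul_comm _ _
  have hs2 : ∑ j, m * (p ^ α j - 1) = m * ∑ j, (p ^ α j - 1) := by
    rw [Finset.mul_sum]
  refine aux p hp r α m (∑ j, α j) _ hm ?_ ?_ g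
  · rw [hs1]
    omega
  · rw [hs2] at hbig
    omega
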